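/- There exist critical values $x_c > 1$ and $\theta_c > 0$ such that $x_c \int_{\mathbb{X}} H(a) e^{H(a)(x_c-1)} q(da) = \int_{\mathbb{X}} e^{H(a)(x_c-1)} q(da)$, $\theta_c = -\log \int_{\mathbb{X}} H(a) e^{H(a)(x_c-1)} q(da)$, and the function $G_{\theta_c}(x) = e^{\theta_c} \int_{\mathbb{X}} e^{H(a)(x-1)} q(da) - x$ satisfies $G_{\theta_c}(x) \geq 0$ for all $x > 1$ with $G_{\theta_c}(x_c) = 0$ (i.e. $\min_{x>1} G_{\theta_c}(x) = 0$). -/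

import Mathlib

open MeasureTheory Filter Set Topology

/-- The moment generating type function `t ↦ ∫ e^{H(a) t} dq`. -/
noncomputable def Mfun {X : Type*} [MeasurableSpace X] (q : Measure X) (H : X → ℝ) (t : ℝ) : ℝ :=
  ∫ a, Real.exp (H a * t) ∂q

/-- Its derivative `t ↦ ∫ H(a) e^{H(a) t} dq`. -/
noncomputable def Mder {X : Type*} [MeasurableSpace X] (q : Measure X) (H : X → ℝ) (t : ℝ) : ℝ :=
  ∫ a, H a * Real.exp (H a * t) ∂q

lemma Mkey {X : Type*} [MeasurableSpace X] (q : Measure X) [IsProbabilityMeasure q]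
    (H : X → ℝ) (hHmeas : Measurable H) (hHnonneg : ∀ a, 0 ≤ H a)
    (hint : ∀ x : ℝ, Integrable (fun a => Real.exp (x * H a)) q) (t : ℝ) :
    Integrable (fun a => H a * Real.exp (H a * t)) q ∧
      HasDerivAt (Mfun q H) (Mder q H t) t := by
  have h := hasDerivAt_integral_of_dominated_loc_of_deriv_le
      (μ := q) (F := fun x a => Real.exp (H a * x)) (F' := fun x a => H a * Real.exp (H a * x))
      (x₀ := t) (bound := fun a => Real.exp ((|t| + 2) * H a)) (s := Metric.ball t 1) (Metric.ball_mem_nhds t zero_lt_one)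
      (Eventually.of_forall fun x =>
        ((hHmeas.mul_const x).exp).aestronglyMeasurable)
      (by simpa [mul_comm] using hint t)
      ((hHmeas.mul ((hHmeas.mul_const t).exp)).aestronglyMeasurable)
      (by
        filter_upwards with a
        intro x hx
        have h0 : 0 ≤ H a := hHnonneg a
        have hx' : x ≤ |t| + 1 := by
          have h1 : |x - t| < 1 := by simpa [Real.dist_eq] using hx
          have := (abs_lt.mp h1).2
          have := le_abs_self t
          linarith
        rw [Real.norm_eq_abs, abs_of_nonneg (by positivity)]
        calc H a * Real.exp (H a * x)
            ≤ Real.exp (H a) * Real.exp (H a * (|t| + 1)) := by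
              apply mul_le_mul
              · linarith [Real.add_one_le_exp (H a)]
              · exact Real.exp_le_exp.2 (mul_le_mul_of_nonneg_left hx' h0)
              · positivity
              · positivity
          _ = Real.exp ((|t| + 2) * H a) := by
              rw [← Real.exp_add]; ring_nf)
      (by simpa using hint (|t| + 2))
      (by
        filter_upwards with a
        intro x hx
        simpa [mul_comm] using ((hasDerivAt_id x).const_mul (H a)).exp)
  exact ⟨h.1, h.2⟩

lemma exists_lt_of_hasDerivAt_neg {g : ℝ → ℝ} {d w b : ℝ} (hg : HasDerivAt g d w)
    (hd : d < 0) (hwb : w < b) : ∃ y, w < y ∧ y < b ∧ g y < g w := by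
  have h : Tendsto (slope g w) (𝓝[>] w) (𝓝 d) :=
    (hasDerivAt_iff_tendsto_slope.mp hg).mono_left
      (nhdsWithin_mono _ fun y hy => Set.mem_compl_singleton_iff.mpr (ne_of_gt hy))
  have h1 : ∀ᶠ y in 𝓝[>] w, slope g w y < 0 := h.eventually_lt_const hd
  have h2 : ∀ᶠ y in 𝓝[>] w, y < b :=
    eventually_nhdsWithin_of_eventually_nhds (eventually_lt_nhds hwb)
  have h3 : ∀ᶠ y in 𝓝[>] w, y ∈ Ioi w := eventually_mem_nhdsWithin
  obtain ⟨y, hy1, hy2, hy3⟩ := (h1.and (h2.and h3)).exists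
  refine ⟨y, hy3, hy2, ?_⟩
  rw [slope_def_field] at hy1
  rcases div_neg_iff.mp hy1 with ⟨_, h⟩ | ⟨h, _⟩
  · have : w < y := hy3; linarith
  · linarith
lemma exists_lt_of_hasDerivAt_pos {g : ℝ → ℝ} {d a w : ℝ} (hg : HasDerivAt g d w)
    (hd : 0 < d) (haw : a < w) : ∃ z, a < z ∧ z < w ∧ g z < g w := by
  have h : Tendsto (slope g w) (𝓝[<] w) (𝓝 d) :=
    (hasDerivAt_iff_tendsto_slope.mp hg).mono_left
      (nhdsWithin_mono _ fun y hy => Set.mem_compl_singleton_iff.mpr (ne_of_lt hy))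
  have h1 : ∀ᶠ z in 𝓝[<] w, 0 < slope g w z := h.eventually_const_lt hd
  have h2 : ∀ᶠ z in 𝓝[<] w, a < z :=
    eventually_nhdsWithin_of_eventually_nhds (eventually_gt_nhds haw)
  have h3 : ∀ᶠ z in 𝓝[<] w, z ∈ Iio w := eventually_mem_nhdsWithin
  obtain ⟨z, hz1, hz2, hz3⟩ := (h1.and (h2.and h3)).exists
  refine ⟨z, hz2, hz3, ?_⟩
  rw [slope_def_field] at hz1
  rcases div_pos_iff.mp hz1 with ⟨_, h⟩ | ⟨h, _⟩
  · have : z < w := hz3; linarith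
  · linarith

theorem stmt_0 {X : Type*} [MeasurableSpace X] (q : Measure X) [IsProbabilityMeasure q]
    (H : X → ℝ) (hHmeas : Measurable H) (hHnonneg : ∀ a, 0 ≤ H a)
    (hHmean : ∫ a, H a ∂q < 1)
    (hint : ∀ x : ℝ, Integrable (fun a => Real.exp (x * H a)) q)
    (hgrow : Tendsto (fun x : ℝ => (∫ a, Real.exp (x * H a) ∂q) - x) atTop atTop) :
    ∃ xc θc : ℝ, 1 < xc ∧ 0 < θc ∧
      xc * ∫ a, H a * Real.exp (H a * (xc - 1)) ∂q = ∫ a, Real.exp (H a * (xc - 1)) ∂q ∧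
      θc = -Real.log (∫ a, H a * Real.exp (H a * (xc - 1)) ∂q) ∧
      (∀ x > (1 : ℝ), 0 ≤ Real.exp θc * (∫ a, Real.exp (H a * (x - 1)) ∂q) - x) ∧
      Real.exp θc * (∫ a, Real.exp (H a * (xc - 1)) ∂q) - xc = 0 := by
  have key := fun t => Mkey q H hHmeas hHnonneg hint t
  have hMd : ∀ t, HasDerivAt (Mfun q H) (Mder q H t) t := fun t => (key t).2
  have hM0 : Mfun q H 0 = 1 := by simp [Mfun]
  have hMd0 : Mder q H 0 = ∫ a, H a ∂q := by simp [Mder]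
  have hMpos : ∀ t, 0 < Mfun q H t := by
    intro t
    have h := ProbabilityTheory.mgf_pos (X := H) (μ := q) (t := t) (hint t)
    simpa [ProbabilityTheory.mgf, Mfun, mul_comm] using h
  -- monotonicity of the derivative
  have hmono : Monotone (Mder q H) := by
    intro t u htu
    refine integral_mono (key t).1 (key u).1 fun a => ?_
    exact mul_le_mul_of_nonneg_left
      (Real.exp_le_exp.2 (mul_le_mul_of_nonneg_left htu (hHnonneg a))) (hHnonneg a)
  -- upper bound M s ≤ 1 + s * M' s for s ≥ 0
  have hub : ∀ s : ℝ, 0 ≤ s → Mfun q H s ≤ 1 + s * Mder q H s := by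
    intro s hs
    have hintL : Integrable (fun a => Real.exp (H a * s)) q := by
      simpa [mul_comm] using hint s
    have hintR : Integrable (fun a => 1 + s * (H a * Real.exp (H a * s))) q :=
      (integrable_const 1).add ((key s).1.const_mul s)
    have hpt : ∀ a, Real.exp (H a * s) ≤ 1 + s * (H a * Real.exp (H a * s)) := by
      intro a
      have hu : 0 ≤ H a * s := mul_nonneg (hHnonneg a) hs
      set u := H a * s with hudef
      have h1 : -u + 1 ≤ Real.exp (-u) := Real.add_one_le_exp (-u)
      have h3 : Real.exp (-u) * Real.exp u = 1 := by
        rw [← Real.exp_add]; simp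
      have h4 := mul_le_mul_of_nonneg_right h1 (Real.exp_pos u).le
      have : Real.exp u ≤ 1 + u * Real.exp u := by nlinarith [Real.exp_pos u]
      calc Real.exp u ≤ 1 + u * Real.exp u := this
        _ = 1 + s * (H a * Real.exp u) := by rw [hudef]; ring
    calc Mfun q H s ≤ ∫ a, (1 + s * (H a * Real.exp (H a * s))) ∂q :=
          integral_mono hintL hintR hpt
      _ = 1 + s * Mder q H s := by
          rw [integral_add (integrable_const 1) ((key s).1.const_mul s),
            integral_const, integral_const_mul]
          simp [Mder]
  -- growth of M
  have hgrow' : Tendsto (fun x => Mfun q H x - x) atTop atTop := by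
    have he : (fun x => Mfun q H x - x)
        = fun x : ℝ => (∫ a, Real.exp (x * H a) ∂q) - x := by
      funext x; simp [Mfun, mul_comm]
    rw [he]; exact hgrow
  obtain ⟨t, htg, ht0⟩ :=
    ((hgrow'.eventually_gt_atTop 1).and (eventually_gt_atTop (0 : ℝ))).exists
  have hMd_t : 1 < Mder q H t := by nlinarith [hub t ht0.le]
  set x₁ : ℝ := t + 1 with hx₁def
  have h1x₁ : (1 : ℝ) < x₁ := by simp [hx₁def]; linarith
  have hψ₁ : 0 < x₁ * Mder q H (x₁ - 1) - Mfun q H (x₁ - 1) := by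
    have hsimp : x₁ - 1 = t := by simp [hx₁def]
    rw [hsimp]
    nlinarith [hub t ht0.le]
  -- the function f
  set f : ℝ → ℝ := fun x => Mfun q H (x - 1) / x with hfdef
  have hf : ∀ x : ℝ, 0 < x →
      HasDerivAt f ((x * Mder q H (x - 1) - Mfun q H (x - 1)) / x ^ 2) x := by
    intro x hx
    have h₁ : HasDerivAt (fun x : ℝ => Mfun q H (x - 1)) (Mder q H (x - 1)) x := by
      have := (hMd (x - 1)).comp x ((hasDerivAt_id x).sub_const 1)
      rw [mul_one] at this; exact this
    have h₂ := h₁.div (hasDerivAt_id x) hx.ne'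
    convert h₂ using 1
    · rfl
    · rfl
    · rfl
    · simp only [id]
      ring
  have hf1 : f 1 = 1 := by simp [hfdef, hM0]
  -- point to the right of 1 with smaller value
  have hd1 : (1 * Mder q H (1 - 1) - Mfun q H (1 - 1)) / (1 : ℝ) ^ 2 < 0 := by
    norm_num [hMd0, hM0]
    linarith
  obtain ⟨y, h1y, hyx₁, hfy⟩ := exists_lt_of_hasDerivAt_neg (hf 1 one_pos) hd1 h1x₁
  -- point to the left of x₁ with smaller value
  have hdx₁ : 0 < (x₁ * Mder q H (x₁ - 1) - Mfun q H (x₁ - 1)) / x₁ ^ 2 :=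
    div_pos hψ₁ (by positivity)
  obtain ⟨z, h1z, hzx₁, hfz⟩ :=
    exists_lt_of_hasDerivAt_pos (hf x₁ (by linarith)) hdx₁ h1x₁
  -- minimize f on [1, x₁]
  have hfc : ContinuousOn f (Icc 1 x₁) := fun x hx =>
    ((hf x (by linarith [hx.1])).continuousAt).continuousWithinAt
  obtain ⟨xc, hxcmem, hxcmin⟩ :=
    isCompact_Icc.exists_isMinOn ⟨1, left_mem_Icc.2 h1x₁.le⟩ hfc
  have hfxclt1 : f xc < 1 := by
    have := hxcmin ⟨h1y.le, hyx₁.le⟩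
    rw [hf1] at hfy
    exact lt_of_le_of_lt this hfy
  have hxc1 : 1 < xc := by
    rcases lt_or_eq_of_le hxcmem.1 with h | h
    · exact h
    · exfalso; rw [← h, hf1] at hfxclt1; linarith
  have hxcx₁ : xc < x₁ := by
    rcases lt_or_eq_of_le hxcmem.2 with h | h
    · exact h
    · exfalso
      have h2 := hxcmin ⟨h1z.le, hzx₁.le⟩
      simp only [Set.mem_setOf_eq] at h2
      rw [h] at h2
      linarith
  have hxc0 : (0 : ℝ) < xc := by linarith
  have hloc : IsLocalMin f xc := hxcmin.isLocalMin (Icc_mem_nhds hxc1 hxcx₁)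
  have hcrit : (xc * Mder q H (xc - 1) - Mfun q H (xc - 1)) / xc ^ 2 = 0 :=
    hloc.hasDerivAt_eq_zero (hf xc hxc0)
  have hkey : xc * Mder q H (xc - 1) = Mfun q H (xc - 1) := by
    field_simp at hcrit
    linarith
  set c : ℝ := Mder q H (xc - 1) with hcdef
  have hcpos : 0 < c := by nlinarith [hMpos (xc - 1)]
  have hfxc : f xc = c := by
    simp only [hfdef]
    rw [← hkey]
    field_simp
  have hc1 : c < 1 := by rw [← hfxc]; exact hfxclt1
  -- tangent line inequality
  have htan : ∀ x : ℝ, 1 < x → c * x ≤ Mfun q H (x - 1) := by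
    intro x hx
    rcases lt_trichotomy x xc with hlt | heq | hgt
    · obtain ⟨ξ, hξ, hval⟩ := exists_hasDerivAt_eq_slope (Mfun q H) (Mder q H)
        (by linarith : x - 1 < xc - 1)
        (fun y _ => (hMd y).continuousAt.continuousWithinAt)
        (fun y _ => hMd y)
      have hle : Mder q H ξ ≤ c := hmono hξ.2.le
      rw [eq_div_iff (by intro hcon; simp at hcon; linarith : xc - 1 - (x - 1) ≠ 0)] at hval
      have h5 : Mder q H ξ * (xc - 1 - (x - 1)) ≤ c * (xc - 1 - (x - 1)) :=
        mul_le_mul_of_nonneg_right hle (by linarith)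
      have h6 : c * (xc - 1 - (x - 1)) = c * xc - c * x := by ring
      linarith [hkey]
    · rw [heq, ← hkey]; linarith
    · obtain ⟨ξ, hξ, hval⟩ := exists_hasDerivAt_eq_slope (Mfun q H) (Mder q H)
        (by linarith : xc - 1 < x - 1)
        (fun y _ => (hMd y).continuousAt.continuousWithinAt)
        (fun y _ => hMd y)
      have hle : c ≤ Mder q H ξ := hmono hξ.1.le
      rw [eq_div_iff (by intro hcon; simp at hcon; linarith : x - 1 - (xc - 1) ≠ 0)] at hval
      have h5 : c * (x - 1 - (xc - 1)) ≤ Mder q H ξ * (x - 1 - (xc - 1)) :=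
        mul_le_mul_of_nonneg_right hle (by linarith)
      have h6 : c * (x - 1 - (xc - 1)) = c * x - c * xc := by ring
      linarith [hkey]
  refine ⟨xc, -Real.log c, hxc1, ?_, ?_, rfl, ?_, ?_⟩
  · have := Real.log_neg hcpos hc1
    linarith
  · show xc * Mder q H (xc - 1) = Mfun q H (xc - 1)
    exact hkey
  · intro x hx
    have h1 := htan x hx
    have hexp : Real.exp (-Real.log c) = c⁻¹ := by
      rw [Real.exp_neg, Real.exp_log hcpos]
    show 0 ≤ Real.exp (-Real.log c) * Mfun q H (x - 1) - x
    rw [hexp]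
    have h2 := mul_le_mul_of_nonneg_left h1 (inv_pos.2 hcpos).le
    have h3 : c⁻¹ * (c * x) = x := by field_simp
    linarith
  · have hexp : Real.exp (-Real.log c) = c⁻¹ := by
      rw [Real.exp_neg, Real.exp_log hcpos]
    show Real.exp (-Real.log c) * Mfun q H (xc - 1) - xc = 0
    rw [hexp, ← hkey]
    field_simp
    ring
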